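/- arXiv:2604.13040 — 6 statements merged into one kernel-verified Lean document; each statement's English description precedes it below -/
import Mathlib

section
/- Let (A,B,R,σ) be a context over a multi-adjoint frame, with necessity operators ↓N and ↑N as above, where all conjunctors of all frames have no zero-divisors, and let (A,B,R^B) be the associated Boolean context. Then for every X ⊆ B and Y ⊆ A the equalities (χ_X)^{↑N} = χ_{X^{↑N}} and (χ_Y)^{↓N} = χ_{Y^{↓N}} hold, where χ_X: B→{⊥2,⊤2} and χ_Y: A→{⊥1,⊤1} are the characteristic functions of X and Y, and X^{↑N} = {a ∈ A | for each b ∈ B, if R^B(a,b)=1 then b ∈ X}, Y^{↓N} = {b ∈ B | for each a ∈ A, if R^B(a,b)=1 then a ∈ Y} are the crisp necessity operators. -/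
/-- An adjoint triple with respect to posets `P1`, `P2`, `P3`:
`x ≤ sdiv z y ↔ conj x y ≤ z ↔ y ≤ nwar z x`. -/
def IsAdjointTriple {P1 P2 P3 : Type*} [PartialOrder P1] [PartialOrder P2] [PartialOrder P3]
    (conj : P1 → P2 → P3) (sdiv : P3 → P2 → P1) (nwar : P3 → P1 → P2) : Prop :=
  ∀ (x : P1) (y : P2) (z : P3),
    (x ≤ sdiv z y ↔ conj x y ≤ z) ∧ (conj x y ≤ z ↔ y ≤ nwar z x)

/-- An operator between lower-bounded posets has no zero-divisors. -/
def NoZD {Q1 Q2 Q3 : Type*} [Bot Q1] [Bot Q2] [Bot Q3] (conj : Q1 → Q2 → Q3) : Prop :=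
  ∀ x y, conj x y = ⊥ → x = ⊥ ∨ y = ⊥

/-- Characteristic function of a set, valued in `{⊥, ⊤}`. -/
noncomputable def chi {α L : Type*} [Top L] [Bot L] (X : Set α) (a : α) : L := by
  classical exact if a ∈ X then ⊤ else ⊥

/-- Necessity operator `↑N : L2^B → L1^A` of the object-oriented frame. -/
def upN {A B L1 L2 P ιo : Type*} [CompleteLattice L1]
    (R : A → B → P) (sdivO : ιo → L2 → P → L1) (σo : A → B → ιo) (g : B → L2) : A → L1 :=
  fun a => ⨅ b, sdivO (σo a b) (g b) (R a b)

/-- Necessity operator `↓N : L1^A → L2^B` of the property-oriented frame. -/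
def downN {A B L1 L2 P ιp : Type*} [CompleteLattice L2]
    (R : A → B → P) (nwarP : ιp → L1 → P → L2) (σp : A → B → ιp) (f : A → L1) : B → L2 :=
  fun b => ⨅ a, nwarP (σp a b) (f a) (R a b)

/-- The fuzzy necessity operators applied to characteristic functions agree with the
characteristic functions of the crisp necessity operators of the associated Boolean
context. -/
theorem necessity_chi
    {A B : Type*} [Nonempty A] [Nonempty B]
    {L1 L2 P : Type*} [CompleteLattice L1] [CompleteLattice L2]
    [PartialOrder P] [BoundedOrder P]
    {ι ιp ιo : Type*}
    (conj : ι → L1 → L2 → P) (sdiv : ι → P → L2 → L1) (nwar : ι → P → L1 → L2)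
    (hMA : ∀ i, IsAdjointTriple (conj i) (sdiv i) (nwar i))
    (hMAnzd : ∀ i, NoZD (conj i))
    (conjP : ιp → P → L2 → L1) (sdivP : ιp → L1 → L2 → P) (nwarP : ιp → L1 → P → L2)
    (hPO : ∀ j, IsAdjointTriple (conjP j) (sdivP j) (nwarP j))
    (hPOnzd : ∀ j, NoZD (conjP j))
    (conjO : ιo → L1 → P → L2) (sdivO : ιo → L2 → P → L1) (nwarO : ιo → L2 → L1 → P)
    (hOO : ∀ k, IsAdjointTriple (conjO k) (sdivO k) (nwarO k))
    (hOOnzd : ∀ k, NoZD (conjO k))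
    (R : A → B → P) (σ : A → B → ι) (σp : A → B → ιp) (σo : A → B → ιo) :
    ∀ (X : Set B) (Y : Set A),
      upN R sdivO σo (chi X) = (chi {a : A | ∀ b : B, R a b ≠ ⊥ → b ∈ X} : A → L1) ∧
      downN R nwarP σp (chi Y) = (chi {b : B | ∀ a : A, R a b ≠ ⊥ → a ∈ Y} : B → L2) := by
    classical
  intro X Y
  constructor
  · funext a
    unfold upN chi
    by_cases h : ∀ b : B, R a b ≠ ⊥ → b ∈ X
    · rw [if_pos (by exact h)]
      refine le_antisymm le_top (le_iInf fun b => ?_)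
      by_cases hb : b ∈ X
      · rw [if_pos hb]
        exact ((hOO (σo a b)) ⊤ (R a b) ⊤).1.mpr le_top
      · have hR : R a b = ⊥ := by
          by_contra hR; exact hb (h b hR)
        rw [if_neg hb, hR]
        have hconj : conjO (σo a b) ⊤ ⊥ ≤ ⊥ :=
          ((hOO (σo a b)) ⊤ ⊥ ⊥).2.mpr bot_le
        exact ((hOO (σo a b)) ⊤ ⊥ ⊥).1.mpr hconj
    · rw [if_neg (by exact h)]
      push_neg at h
      obtain ⟨b, hR, hb⟩ := h
      refine le_antisymm (le_trans (iInf_le _ b) ?_) bot_le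
      rw [if_neg hb]
      have h1 : conjO (σo a b) (sdivO (σo a b) ⊥ (R a b)) (R a b) ≤ ⊥ :=
        ((hOO (σo a b)) _ (R a b) ⊥).1.mp le_rfl
      rcases hOOnzd (σo a b) _ (R a b) (le_bot_iff.mp h1) with h2 | h2
      · exact h2.le
      · exact absurd h2 hR
  · funext b
    unfold downN chi
    by_cases h : ∀ a : A, R a b ≠ ⊥ → a ∈ Y
    · rw [if_pos (by exact h)]
      refine le_antisymm le_top (le_iInf fun a => ?_)
      by_cases ha : a ∈ Y
      · rw [if_pos ha]
        exact ((hPO (σp a b)) (R a b) ⊤ ⊤).2.mp le_top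
      · have hR : R a b = ⊥ := by
          by_contra hR; exact ha (h a hR)
        rw [if_neg ha, hR]
        have hconj : conjP (σp a b) ⊥ ⊤ ≤ ⊥ :=
          ((hPO (σp a b)) ⊥ ⊤ ⊥).1.mp bot_le
        exact ((hPO (σp a b)) ⊥ ⊤ ⊥).2.mp hconj
    · rw [if_neg (by exact h)]
      push_neg at h
      obtain ⟨a, hR, ha⟩ := h
      refine le_antisymm (le_trans (iInf_le _ a) ?_) bot_le
      rw [if_neg ha]
      have h1 : conjP (σp a b) (R a b) (nwarP (σp a b) ⊥ (R a b)) ≤ ⊥ :=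
        ((hPO (σp a b)) (R a b) _ ⊥).2.mpr le_rfl
      rcases hPOnzd (σp a b) (R a b) _ (le_bot_iff.mp h1) with h2 | h2
      · exact absurd h2 hR
      · exact h2.le
end

section
/- Let (A,B,R,σ) be a normalized context over a multi-adjoint frame, with necessity operators ↓N and ↑N and all conjunctors of all frames without zero-divisors. If (A,B,R,σ) has a decomposition into independent subcontexts {(A_λ, B_λ, R_{A_λ×B_λ}, σ_{A_λ×B_λ})}_{λ∈Λ}, then (χ_{B_λ}, χ_{A_λ}) ∈ F_N for all λ ∈ Λ, i.e. (χ_{B_λ})^{↑N} = χ_{A_λ} and (χ_{A_λ})^{↓N} = χ_{B_λ}. -/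
/-- A context is normalized if every row and every column of `R` contains both a
`⊥` value and a non-`⊥` value. -/
def Normalized {A B P : Type*} [Bot P] (R : A → B → P) : Prop :=
  (∀ a, (∃ b, R a b ≠ ⊥) ∧ (∃ b, R a b = ⊥)) ∧
  (∀ b, (∃ a, R a b ≠ ⊥) ∧ (∃ a, R a b = ⊥))

/-- `(Y, X, R|_{Y×X})` is a separable subcontext of the context with relation `R`. -/
def Separable {A B P : Type*} [Bot P] (R : A → B → P) (Y : Set A) (X : Set B) : Prop :=
  Y ≠ ∅ ∧ Y ≠ Set.univ ∧ X ≠ ∅ ∧ X ≠ Set.univ ∧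
  (∃ a ∈ Y, ∃ b ∈ X, R a b ≠ ⊥) ∧
  (∀ a ∈ Y, ∀ b ∉ X, R a b = ⊥) ∧
  (∀ a ∉ Y, ∀ b ∈ X, R a b = ⊥)

/-- The family `(Afam l, Bfam l)` is a decomposition of the context into
independent subcontexts. -/
def IsDecomposition {A B P L1 L2 ι Λ : Type*} [Bot P] [Bot L1] [Bot L2]
    (R : A → B → P) (conj : ι → L1 → L2 → P) (σ : A → B → ι)
    (Afam : Λ → Set A) (Bfam : Λ → Set B) : Prop :=
  Nonempty Λ ∧
  (∀ l, Separable R (Afam l) (Bfam l)) ∧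
  (⋃ l, Afam l) = Set.univ ∧
  (⋃ l, Bfam l) = Set.univ ∧
  (∀ l m, l ≠ m → Afam l ∩ Afam m = ∅) ∧
  (∀ l m, l ≠ m → Bfam l ∩ Bfam m = ∅) ∧
  (∀ l, ∀ a ∉ Afam l, ∀ b ∈ Bfam l, NoZD (conj (σ a b))) ∧
  (∀ l, ∀ a ∈ Afam l, ∀ b ∉ Bfam l, NoZD (conj (σ a b)))

section Helpers

variable {P1 P2 P3 : Type*} [PartialOrder P1] [PartialOrder P2] [PartialOrder P3]
  {c : P1 → P2 → P3} {s : P3 → P2 → P1} {n : P3 → P1 → P2}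

lemma my_sdiv_top [OrderTop P1] [OrderTop P3] (h : IsAdjointTriple c s n) (y : P2) :
    s ⊤ y = ⊤ :=
  top_le_iff.mp (((h ⊤ y ⊤).1).mpr le_top)

lemma my_sdiv_bot_right [OrderTop P1] [OrderBot P2] (h : IsAdjointTriple c s n) (z : P3) :
    s z ⊥ = ⊤ :=
  top_le_iff.mp (((h ⊤ ⊥ z).1).mpr (((h ⊤ ⊥ z).2).mpr bot_le))

lemma my_sdiv_bot [OrderBot P1] [OrderBot P2] [OrderBot P3]
    (h : IsAdjointTriple c s n) (hz : NoZD c) {y : P2} (hy : y ≠ ⊥) : s ⊥ y = ⊥ := by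
  have hc : c (s ⊥ y) y = ⊥ := le_bot_iff.mp (((h (s ⊥ y) y ⊥).1).mp le_rfl)
  rcases hz _ _ hc with h1 | h2
  · exact h1
  · exact absurd h2 hy

lemma my_nwar_top [OrderTop P2] [OrderTop P3] (h : IsAdjointTriple c s n) (x : P1) :
    n ⊤ x = ⊤ :=
  top_le_iff.mp (((h x ⊤ ⊤).2).mp le_top)

lemma my_nwar_bot_left [OrderBot P1] [OrderTop P2] (h : IsAdjointTriple c s n) (z : P3) :
    n z ⊥ = ⊤ :=
  top_le_iff.mp (((h ⊥ ⊤ z).2).mp (((h ⊥ ⊤ z).1).mp bot_le))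

lemma my_nwar_bot [OrderBot P1] [OrderBot P2] [OrderBot P3]
    (h : IsAdjointTriple c s n) (hz : NoZD c) {x : P1} (hx : x ≠ ⊥) : n ⊥ x = ⊥ := by
  have hc : c x (n ⊥ x) = ⊥ := le_bot_iff.mp (((h x (n ⊥ x) ⊥).2).mpr le_rfl)
  rcases hz _ _ hc with h1 | h2
  · exact absurd h1 hx
  · exact h2

end Helpers

/-- If a normalized context has a decomposition into independent subcontexts
`{(A_λ, B_λ)}`, then `(χ_{B_λ}, χ_{A_λ}) ∈ F_N` for all `λ`. -/
theorem decomposition_chi_mem_FN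
    {A B : Type*} [Nonempty A] [Nonempty B]
    {L1 L2 P : Type*} [CompleteLattice L1] [CompleteLattice L2]
    [PartialOrder P] [BoundedOrder P]
    {ι ιp ιo : Type*}
    (conj : ι → L1 → L2 → P) (sdiv : ι → P → L2 → L1) (nwar : ι → P → L1 → L2)
    (hMA : ∀ i, IsAdjointTriple (conj i) (sdiv i) (nwar i))
    (hMAnzd : ∀ i, NoZD (conj i))
    (conjP : ιp → P → L2 → L1) (sdivP : ιp → L1 → L2 → P) (nwarP : ιp → L1 → P → L2)
    (hPO : ∀ j, IsAdjointTriple (conjP j) (sdivP j) (nwarP j))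
    (hPOnzd : ∀ j, NoZD (conjP j))
    (conjO : ιo → L1 → P → L2) (sdivO : ιo → L2 → P → L1) (nwarO : ιo → L2 → L1 → P)
    (hOO : ∀ k, IsAdjointTriple (conjO k) (sdivO k) (nwarO k))
    (hOOnzd : ∀ k, NoZD (conjO k))
    (R : A → B → P) (σ : A → B → ι) (σp : A → B → ιp) (σo : A → B → ιo)
    (hnorm : Normalized R)
    {Λ : Type*} (Afam : Λ → Set A) (Bfam : Λ → Set B)
    (hdec : IsDecomposition R conj σ Afam Bfam) :
    ∀ l : Λ,
      upN R sdivO σo (chi (Bfam l)) = (chi (Afam l) : A → L1) ∧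
      downN R nwarP σp (chi (Afam l)) = (chi (Bfam l) : B → L2) := by
  obtain ⟨hAnorm, hBnorm⟩ := hnorm
  obtain ⟨hΛ, hsep, hAcov, hBcov, hAdisj, hBdisj, hzd1, hzd2⟩ := hdec
  intro l
  obtain ⟨-, -, -, -, -, hYX, hXY⟩ := hsep l
  constructor
  · funext a
    unfold upN chi
    by_cases ha : a ∈ Afam l
    · simp only [ha, if_pos]
      refine le_antisymm le_top (le_iInf fun b => ?_)
      by_cases hb : b ∈ Bfam l
      · rw [if_pos hb, my_sdiv_top (hOO (σo a b))]
      · rw [hYX a ha b hb, my_sdiv_bot_right (hOO (σo a b))]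
    · simp only [ha, if_neg, not_false_iff]
      -- find b ∉ Bfam l with R a b ≠ ⊥
      have hmem : a ∈ ⋃ m, Afam m := hAcov ▸ Set.mem_univ a
      obtain ⟨m, ham⟩ := Set.mem_iUnion.mp hmem
      have hml : m ≠ l := fun h => ha (h ▸ ham)
      obtain ⟨b, hbne⟩ := (hAnorm a).1
      obtain ⟨-, -, -, -, -, hYXm, -⟩ := hsep m
      have hbm : b ∈ Bfam m := by
        by_contra hbm
        exact hbne (hYXm a ham b hbm)
      have hbl : b ∉ Bfam l := fun hbl =>
        Set.eq_empty_iff_forall_notMem.mp (hBdisj m l hml) b ⟨hbm, hbl⟩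
      refine le_antisymm (le_trans (iInf_le _ b) ?_) bot_le
      rw [if_neg hbl, my_sdiv_bot (hOO (σo a b)) (hOOnzd (σo a b)) hbne]
  · funext b
    unfold downN chi
    by_cases hb : b ∈ Bfam l
    · simp only [hb, if_pos]
      refine le_antisymm le_top (le_iInf fun a => ?_)
      by_cases ha : a ∈ Afam l
      · rw [if_pos ha, my_nwar_top (hPO (σp a b))]
      · rw [if_neg ha, hXY a ha b hb, my_nwar_bot_left (hPO (σp a b))]
    · simp only [hb, if_neg, not_false_iff]
      have hmem : b ∈ ⋃ m, Bfam m := hBcov ▸ Set.mem_univ b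
      obtain ⟨m, hbm⟩ := Set.mem_iUnion.mp hmem
      have hml : m ≠ l := fun h => hb (h ▸ hbm)
      obtain ⟨a, hane⟩ := (hBnorm b).1
      obtain ⟨-, -, -, -, -, -, hXYm⟩ := hsep m
      have ham : a ∈ Afam m := by
        by_contra ham
        exact hane (hXYm a ham b hbm)
      have hal : a ∉ Afam l := fun hal =>
        Set.eq_empty_iff_forall_notMem.mp (hAdisj m l hml) a ⟨ham, hal⟩
      refine le_antisymm (le_trans (iInf_le _ a) ?_) bot_le
      rw [if_neg hal, my_nwar_bot (hPO (σp a b)) (hPOnzd (σp a b)) hane]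
end

section
/- Let (A,B,R,σ) be a normalized context over a multi-adjoint frame whose conjunctors have no zero-divisors, with concept-forming operators ↑ and ↓, and let (g,f) = (χ_X, χ_Y) ∈ FC. If g^↑ ≠ f_⊥, then the pair ⟨g, g^↑⟩ is a multi-adjoint concept, i.e. g^{↑↓} = g. Dually, if f^↓ ≠ g_⊥, then ⟨f^↓, f⟩ is a multi-adjoint concept, i.e. f^{↓↑} = f. Here f_⊥(a) = ⊥1 for all a ∈ A and g_⊥(b) = ⊥2 for all b ∈ B. -/
/-- Concept-forming operator `↑ : L2^B → L1^A`. -/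
def upOp {A B L1 L2 P ι : Type*} [CompleteLattice L1]
    (R : A → B → P) (sdiv : ι → P → L2 → L1) (σ : A → B → ι) (g : B → L2) : A → L1 :=
  fun a => ⨅ b, sdiv (σ a b) (R a b) (g b)

/-- Concept-forming operator `↓ : L1^A → L2^B`. -/
def downOp {A B L1 L2 P ι : Type*} [CompleteLattice L2]
    (R : A → B → P) (nwar : ι → P → L1 → L2) (σ : A → B → ι) (f : A → L1) : B → L2 :=
  fun b => ⨅ a, nwar (σ a b) (R a b) (f a)

/-- `(χ_X, χ_Y)` belongs to the set `FC`, i.e. `∅ ≠ X ⊊ B`, `∅ ≠ Y ⊊ A`, and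
`(χ_X, χ_Y) ∈ F_N` (that is, `(χ_X)^{↑N} = χ_Y` and `(χ_Y)^{↓N} = χ_X`). -/
def MemFC {A B L1 L2 P ιp ιo : Type*} [CompleteLattice L1] [CompleteLattice L2]
    (R : A → B → P) (sdivO : ιo → L2 → P → L1) (σo : A → B → ιo)
    (nwarP : ιp → L1 → P → L2) (σp : A → B → ιp)
    (X : Set B) (Y : Set A) : Prop :=
  X ≠ ∅ ∧ X ≠ Set.univ ∧ Y ≠ ∅ ∧ Y ≠ Set.univ ∧
  upN R sdivO σo (chi X) = (chi Y : A → L1) ∧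
  downN R nwarP σp (chi Y) = (chi X : B → L2)

/-- For `(g, f) = (χ_X, χ_Y) ∈ FC`: if `g^↑ ≠ f_⊥`, then `⟨g, g^↑⟩` is a multi-adjoint
concept (`g^{↑↓} = g`); dually, if `f^↓ ≠ g_⊥`, then `⟨f^↓, f⟩` is a multi-adjoint
concept (`f^{↓↑} = f`). -/
theorem FC_pair_gives_concepts
    {A B : Type*} [Nonempty A] [Nonempty B]
    {L1 L2 P : Type*} [CompleteLattice L1] [CompleteLattice L2]
    [PartialOrder P] [BoundedOrder P]
    {ι ιp ιo : Type*}
    (conj : ι → L1 → L2 → P) (sdiv : ι → P → L2 → L1) (nwar : ι → P → L1 → L2)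
    (hMA : ∀ i, IsAdjointTriple (conj i) (sdiv i) (nwar i))
    (hMAnzd : ∀ i, NoZD (conj i))
    (conjP : ιp → P → L2 → L1) (sdivP : ιp → L1 → L2 → P) (nwarP : ιp → L1 → P → L2)
    (hPO : ∀ j, IsAdjointTriple (conjP j) (sdivP j) (nwarP j))
    (hPOnzd : ∀ j, NoZD (conjP j))
    (conjO : ιo → L1 → P → L2) (sdivO : ιo → L2 → P → L1) (nwarO : ιo → L2 → L1 → P)
    (hOO : ∀ k, IsAdjointTriple (conjO k) (sdivO k) (nwarO k))
    (hOOnzd : ∀ k, NoZD (conjO k))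
    (R : A → B → P) (σ : A → B → ι) (σp : A → B → ιp) (σo : A → B → ιo)
    (hnorm : Normalized R)
    (X : Set B) (Y : Set A)
    (hXY : MemFC (L1 := L1) (L2 := L2) R sdivO σo nwarP σp X Y) :
    (upOp R sdiv σ (chi X) ≠ (fun _ : A => (⊥ : L1)) →
      downOp R nwar σ (upOp R sdiv σ (chi X)) = (chi X : B → L2)) ∧
    (downOp R nwar σ (chi Y) ≠ (fun _ : B => (⊥ : L2)) →
      upOp R sdiv σ (downOp R nwar σ (chi Y)) = (chi Y : A → L1)) := by
  obtain ⟨hXne, hXuniv, hYne, hYuniv, hUpN, hDownN⟩ := hXY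
  -- basic facts about the multi-adjoint triples
  have sdivbot : ∀ i (y : L2), y ≠ ⊥ → sdiv i ⊥ y = ⊥ := by
    intro i y hy
    have h : conj i (sdiv i ⊥ y) y ≤ ⊥ := ((hMA i) _ y ⊥).1.mp le_rfl
    rcases hMAnzd i _ y (le_bot_iff.mp h) with h | h
    · exact h
    · exact absurd h hy
  have nwarbot : ∀ i (x : L1), x ≠ ⊥ → nwar i ⊥ x = ⊥ := by
    intro i x hx
    have h : conj i x (nwar i ⊥ x) ≤ ⊥ := ((hMA i) x _ ⊥).2.mpr le_rfl
    rcases hMAnzd i x _ (le_bot_iff.mp h) with h | h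
    · exact absurd h hx
    · exact h
  -- Galois-connection facts
  have gal1 : ∀ (g : B → L2) b, g b ≤ downOp R nwar σ (upOp R sdiv σ g) b := by
    intro g b
    simp only [downOp]
    refine le_iInf fun a => ?_
    have h1 : upOp R sdiv σ g a ≤ sdiv (σ a b) (R a b) (g b) := by
      simp only [upOp]; exact iInf_le _ b
    have h2 : conj (σ a b) (upOp R sdiv σ g a) (g b) ≤ R a b :=
      ((hMA _) _ _ _).1.mp h1
    exact ((hMA _) _ _ _).2.mp h2
  have gal2 : ∀ (f : A → L1) a, f a ≤ upOp R sdiv σ (downOp R nwar σ f) a := by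
    intro f a
    simp only [upOp]
    refine le_iInf fun b => ?_
    have h1 : downOp R nwar σ f b ≤ nwar (σ a b) (R a b) (f a) := by
      simp only [downOp]; exact iInf_le _ a
    have h2 : conj (σ a b) (f a) (downOp R nwar σ f b) ≤ R a b :=
      ((hMA _) _ _ _).2.mpr h1
    exact ((hMA _) _ _ _).1.mpr h2
  -- Facts about R obtained from (chi X, chi Y) ∈ F_N
  have factP1 : (⊥ : L1) ≠ ⊤ → ∀ a ∈ Y, ∀ b ∉ X, R a b = ⊥ := by
    intro hL1 a ha b hb
    have h0 := congrFun hUpN a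
    simp only [upN] at h0
    have h1 : (⊤ : L1) ≤ sdivO (σo a b) (chi X b) (R a b) := by
      calc (⊤ : L1) = chi Y a := by simp [chi, ha]
        _ = ⨅ b', sdivO (σo a b') (chi X b') (R a b') := h0.symm
        _ ≤ _ := iInf_le _ b
    rw [show (chi X b : L2) = ⊥ by simp [chi, hb]] at h1
    have h2 : conjO (σo a b) ⊤ (R a b) ≤ ⊥ := ((hOO (σo a b)) ⊤ (R a b) ⊥).1.mp h1
    rcases hOOnzd (σo a b) ⊤ (R a b) (le_bot_iff.mp h2) with h | h
    · exact absurd h.symm hL1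
    · exact h
  have factP2 : (⊥ : L2) ≠ ⊤ → ∀ b ∈ X, ∀ a ∉ Y, R a b = ⊥ := by
    intro hL2 b hb a ha
    have h0 := congrFun hDownN b
    simp only [downN] at h0
    have h1 : (⊤ : L2) ≤ nwarP (σp a b) (chi Y a) (R a b) := by
      calc (⊤ : L2) = chi X b := by simp [chi, hb]
        _ = ⨅ a', nwarP (σp a' b) (chi Y a') (R a' b) := h0.symm
        _ ≤ _ := iInf_le _ a
    rw [show (chi Y a : L1) = ⊥ by simp [chi, ha]] at h1
    have h2 : conjP (σp a b) (R a b) ⊤ ≤ ⊥ := ((hPO (σp a b)) (R a b) ⊤ ⊥).2.mpr h1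
    rcases hPOnzd (σp a b) (R a b) ⊤ (le_bot_iff.mp h2) with h | h
    · exact h
    · exact absurd h.symm hL2
  constructor
  · -- first statement
    intro hne
    by_cases hL2 : (⊥ : L2) = ⊤
    · have : Subsingleton L2 := subsingleton_of_bot_eq_top hL2
      funext b; exact Subsingleton.elim _ _
    have hL1 : (⊥ : L1) ≠ ⊤ := by
      intro h
      have : Subsingleton L1 := subsingleton_of_bot_eq_top h
      exact hne (funext fun a => Subsingleton.elim _ _)
    obtain ⟨b1, hb1⟩ := Set.nonempty_iff_ne_empty.2 hXne
    have claimA : ∀ a, a ∉ Y → upOp R sdiv σ (chi X) a = ⊥ := by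
      intro a ha
      have hR : R a b1 = ⊥ := factP2 hL2 b1 hb1 a ha
      have hle : upOp R sdiv σ (chi X) a ≤ sdiv (σ a b1) (R a b1) (chi X b1) := by
        simp only [upOp]; exact iInf_le _ b1
      rw [hR, show (chi X b1 : L2) = ⊤ by simp [chi, hb1],
        sdivbot _ ⊤ (fun h => hL2 h.symm)] at hle
      exact le_bot_iff.mp hle
    obtain ⟨a0, ha0⟩ : ∃ a, upOp R sdiv σ (chi X) a ≠ ⊥ := by
      by_contra h
      push_neg at h
      exact hne (funext h)
    have ha0Y : a0 ∈ Y := by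
      by_contra h; exact ha0 (claimA a0 h)
    funext b
    by_cases hb : b ∈ X
    · have h1 := gal1 (chi X) b
      have h2 : (chi X b : L2) = ⊤ := by simp [chi, hb]
      rw [h2] at h1
      rw [h2]
      exact top_le_iff.mp h1
    · have hR : R a0 b = ⊥ := factP1 hL1 a0 ha0Y b hb
      have hle : downOp R nwar σ (upOp R sdiv σ (chi X)) b ≤
          nwar (σ a0 b) (R a0 b) (upOp R sdiv σ (chi X) a0) := by
        simp only [downOp]; exact iInf_le _ a0
      rw [hR, nwarbot _ _ ha0] at hle
      rw [show (chi X b : L2) = ⊥ by simp [chi, hb]]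
      exact le_bot_iff.mp hle
  · -- second statement
    intro hne
    by_cases hL1 : (⊥ : L1) = ⊤
    · have : Subsingleton L1 := subsingleton_of_bot_eq_top hL1
      funext a; exact Subsingleton.elim _ _
    have hL2 : (⊥ : L2) ≠ ⊤ := by
      intro h
      have : Subsingleton L2 := subsingleton_of_bot_eq_top h
      exact hne (funext fun b => Subsingleton.elim _ _)
    obtain ⟨a1, ha1⟩ := Set.nonempty_iff_ne_empty.2 hYne
    have claimB : ∀ b, b ∉ X → downOp R nwar σ (chi Y) b = ⊥ := by
      intro b hb
      have hR : R a1 b = ⊥ := factP1 hL1 a1 ha1 b hb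
      have hle : downOp R nwar σ (chi Y) b ≤ nwar (σ a1 b) (R a1 b) (chi Y a1) := by
        simp only [downOp]; exact iInf_le _ a1
      rw [hR, show (chi Y a1 : L1) = ⊤ by simp [chi, ha1],
        nwarbot _ ⊤ (fun h => hL1 h.symm)] at hle
      exact le_bot_iff.mp hle
    obtain ⟨b0, hb0⟩ : ∃ b, downOp R nwar σ (chi Y) b ≠ ⊥ := by
      by_contra h
      push_neg at h
      exact hne (funext h)
    have hb0X : b0 ∈ X := by
      by_contra h; exact hb0 (claimB b0 h)
    funext a
    by_cases ha : a ∈ Y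
    · have h1 := gal2 (chi Y) a
      have h2 : (chi Y a : L1) = ⊤ := by simp [chi, ha]
      rw [h2] at h1
      rw [h2]
      exact top_le_iff.mp h1
    · have hR : R a b0 = ⊥ := factP2 hL2 b0 hb0X a ha
      have hle : upOp R sdiv σ (downOp R nwar σ (chi Y)) a ≤
          sdiv (σ a b0) (R a b0) (downOp R nwar σ (chi Y) b0) := by
        simp only [upOp]; exact iInf_le _ b0
      rw [hR, sdivbot _ _ hb0] at hle
      rw [show (chi Y a : L1) = ⊥ by simp [chi, ha]]
      exact le_bot_iff.mp hle
end

section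
/- Let (A,B,R,σ) be a normalized context over a multi-adjoint frame whose conjunctors (of all frames) have no zero-divisors, and let (g,f) = (χ_X, χ_Y) ∈ FC. If g^↑ ≠ f_⊥, then there is no multi-adjoint concept ⟨g_0, f_0⟩ with ⟨g, g^↑⟩ ≺ ⟨g_0, f_0⟩ ≺ ⟨g_⊤, f_⊥⟩ in the concept lattice order (⟨g_1,f_1⟩ ⪯ ⟨g_2,f_2⟩ iff g_1 ⪯2 g_2). Dually, if f^↓ ≠ g_⊥, then there is no multi-adjoint concept ⟨g_0, f_0⟩ with ⟨g_⊥, f_⊤⟩ ≺ ⟨g_0, f_0⟩ ≺ ⟨f^↓, f⟩. -/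
section AuxChi
variable {α L : Type*} [Top L] [Bot L] {X : Set α} {a : α}

lemma chi_of_mem (h : a ∈ X) : (chi X a : L) = ⊤ := by simp [chi, h]

lemma chi_of_not_mem (h : a ∉ X) : (chi X a : L) = ⊥ := by simp [chi, h]

end AuxChi

section AuxAdj
variable {P1 P2 P3 : Type*} [PartialOrder P1] [BoundedOrder P1]
  [PartialOrder P2] [BoundedOrder P2] [PartialOrder P3] [BoundedOrder P3]
  {conj : P1 → P2 → P3} {sdiv : P3 → P2 → P1} {nwar : P3 → P1 → P2}

lemma sdiv_bot_right (h : IsAdjointTriple conj sdiv nwar) (z : P3) : sdiv z ⊥ = ⊤ :=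
  le_antisymm le_top (((h ⊤ ⊥ z).1).mpr (((h ⊤ ⊥ z).2).mpr bot_le))

lemma nwar_bot_right (h : IsAdjointTriple conj sdiv nwar) (z : P3) : nwar z ⊥ = ⊤ :=
  le_antisymm le_top (((h ⊥ ⊤ z).2).mp (((h ⊥ ⊤ z).1).mp bot_le))

lemma sdiv_bot_of_ne (h : IsAdjointTriple conj sdiv nwar) (hz : NoZD conj)
    {y : P2} (hy : y ≠ ⊥) : sdiv ⊥ y = ⊥ := by
  have h1 : conj (sdiv ⊥ y) y ≤ ⊥ := ((h (sdiv ⊥ y) y ⊥).1).mp le_rfl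
  rcases hz _ _ (le_bot_iff.mp h1) with h2 | h2
  · exact h2
  · exact absurd h2 hy

lemma nwar_bot_of_ne (h : IsAdjointTriple conj sdiv nwar) (hz : NoZD conj)
    {x : P1} (hx : x ≠ ⊥) : nwar ⊥ x = ⊥ := by
  have h1 : conj x (nwar ⊥ x) ≤ ⊥ := ((h x (nwar ⊥ x) ⊥).2).mpr le_rfl
  rcases hz _ _ (le_bot_iff.mp h1) with h2 | h2
  · exact absurd h2 hx
  · exact h2

end AuxAdj

/-- The pair `(↑, ↓)` is an antitone Galois connection. -/
lemma upOp_galois {A B L1 L2 P ι : Type*} [CompleteLattice L1] [CompleteLattice L2]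
    [PartialOrder P]
    {conj : ι → L1 → L2 → P} {sdiv : ι → P → L2 → L1} {nwar : ι → P → L1 → L2}
    (hMA : ∀ i, IsAdjointTriple (conj i) (sdiv i) (nwar i))
    (R : A → B → P) (σ : A → B → ι) (f : A → L1) (g : B → L2) :
    f ≤ upOp R sdiv σ g ↔ g ≤ downOp R nwar σ f := by
  constructor
  · intro h b
    refine le_iInf fun a => ?_
    have h1 : f a ≤ sdiv (σ a b) (R a b) (g b) := (h a).trans (iInf_le _ b)
    exact ((hMA (σ a b)) (f a) (g b) (R a b)).2.mp
      (((hMA (σ a b)) (f a) (g b) (R a b)).1.mp h1)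
  · intro h a
    refine le_iInf fun b => ?_
    have h1 : g b ≤ nwar (σ a b) (R a b) (f a) := (h b).trans (iInf_le _ a)
    exact ((hMA (σ a b)) (f a) (g b) (R a b)).1.mpr
      (((hMA (σ a b)) (f a) (g b) (R a b)).2.mpr h1)

/-- For `(g, f) = (χ_X, χ_Y) ∈ FC`: if `g^↑ ≠ f_⊥`, there is no concept strictly between
`⟨g, g^↑⟩` and the top concept `⟨g_⊤, f_⊥⟩`; dually, if `f^↓ ≠ g_⊥`, there is no concept
strictly between the bottom concept `⟨g_⊥, f_⊤⟩` and `⟨f^↓, f⟩`. -/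
theorem FC_pair_no_concept_between
    {A B : Type*} [Nonempty A] [Nonempty B]
    {L1 L2 P : Type*} [CompleteLattice L1] [CompleteLattice L2]
    [PartialOrder P] [BoundedOrder P]
    {ι ιp ιo : Type*}
    (conj : ι → L1 → L2 → P) (sdiv : ι → P → L2 → L1) (nwar : ι → P → L1 → L2)
    (hMA : ∀ i, IsAdjointTriple (conj i) (sdiv i) (nwar i))
    (hMAnzd : ∀ i, NoZD (conj i))
    (conjP : ιp → P → L2 → L1) (sdivP : ιp → L1 → L2 → P) (nwarP : ιp → L1 → P → L2)
    (hPO : ∀ j, IsAdjointTriple (conjP j) (sdivP j) (nwarP j))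
    (hPOnzd : ∀ j, NoZD (conjP j))
    (conjO : ιo → L1 → P → L2) (sdivO : ιo → L2 → P → L1) (nwarO : ιo → L2 → L1 → P)
    (hOO : ∀ k, IsAdjointTriple (conjO k) (sdivO k) (nwarO k))
    (hOOnzd : ∀ k, NoZD (conjO k))
    (R : A → B → P) (σ : A → B → ι) (σp : A → B → ιp) (σo : A → B → ιo)
    (hnorm : Normalized R)
    (X : Set B) (Y : Set A)
    (hXY : MemFC (L1 := L1) (L2 := L2) R sdivO σo nwarP σp X Y) :
    (upOp R sdiv σ (chi X) ≠ (fun _ : A => (⊥ : L1)) →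
      ¬∃ (g0 : B → L2) (f0 : A → L1),
        (upOp R sdiv σ g0 = f0 ∧ downOp R nwar σ f0 = g0) ∧
        (chi X : B → L2) < g0 ∧ g0 < (fun _ : B => (⊤ : L2))) ∧
    (downOp R nwar σ (chi Y) ≠ (fun _ : B => (⊥ : L2)) →
      ¬∃ (g0 : B → L2) (f0 : A → L1),
        (upOp R sdiv σ g0 = f0 ∧ downOp R nwar σ f0 = g0) ∧
        (fun _ : B => (⊥ : L2)) < g0 ∧ g0 < downOp R nwar σ (chi Y)) := by
  obtain ⟨hX0, hXu, hY0, hYu, hupN, hdownN⟩ := hXY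
  -- characterization: a ∈ Y → (∀ b ∉ X, R a b = ⊥), assuming L1 nontrivial
  have charY : (⊥ : L1) ≠ ⊤ → ∀ a b, a ∈ Y → b ∉ X → R a b = ⊥ := by
    intro h1 a b haY hbX
    by_contra hR
    have hterm : sdivO (σo a b) ((chi X : B → L2) b) (R a b) = ⊥ := by
      rw [chi_of_not_mem hbX]
      exact sdiv_bot_of_ne (hOO _) (hOOnzd _) hR
    have h0 : upN R sdivO σo (chi X) a ≤ (⊥ : L1) := (iInf_le _ b).trans hterm.le
    rw [hupN, chi_of_mem haY] at h0
    exact h1 (le_bot_iff.mp h0).symm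
  -- characterization: b ∈ X → (∀ a ∉ Y, R a b = ⊥), assuming L2 nontrivial
  have charX : (⊥ : L2) ≠ ⊤ → ∀ a b, a ∉ Y → b ∈ X → R a b = ⊥ := by
    intro h2 a b haY hbX
    by_contra hR
    have hterm : nwarP (σp a b) ((chi Y : A → L1) a) (R a b) = ⊥ := by
      rw [chi_of_not_mem haY]
      exact nwar_bot_of_ne (hPO _) (hPOnzd _) hR
    have h0 : downN R nwarP σp (chi Y) b ≤ (⊥ : L2) := (iInf_le _ a).trans hterm.le
    rw [hdownN, chi_of_mem hbX] at h0
    exact h2 (le_bot_iff.mp h0).symm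
  constructor
  · -- Part 1: no concept strictly between ⟨χ_X, χ_X^↑⟩ and the top concept
    rintro _hne ⟨g0, f0, ⟨hup, hdown⟩, hlt1, hlt2⟩
    by_cases h2 : (⊥ : L2) = ⊤
    · exact hlt2.ne (funext fun b => le_antisymm le_top (h2.symm.trans_le bot_le))
    by_cases h1 : (⊥ : L1) = ⊤
    · -- L1 trivial: f0 ≡ ⊥, hence g0 ≡ ⊤
      apply hlt2.ne
      funext b
      refine le_antisymm le_top ?_
      rw [← hdown]
      refine le_iInf fun a => ?_
      have hf0a : f0 a = ⊥ := le_bot_iff.mp (le_top.trans h1.ge)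
      rw [hf0a, nwar_bot_right (hMA _)]
    -- b1 : point where g0 exceeds χ_X
    obtain ⟨b1, hb1⟩ := Function.ne_iff.mp hlt1.ne
    have hb1X : b1 ∉ X := by
      intro hmem
      apply hb1
      rw [chi_of_mem hmem]
      exact le_antisymm (chi_of_mem (L := L2) hmem ▸ hlt1.le b1) le_top
    have hg0b1 : g0 b1 ≠ ⊥ := by
      rw [chi_of_not_mem hb1X] at hb1
      exact hb1.symm
    by_cases hf : ∀ a, f0 a = (⊥ : L1)
    · -- f0 ≡ ⊥ forces g0 ≡ ⊤
      apply hlt2.ne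
      funext b
      refine le_antisymm le_top ?_
      rw [← hdown]
      refine le_iInf fun a => ?_
      rw [hf a, nwar_bot_right (hMA _)]
    push_neg at hf
    obtain ⟨a0, hf0a⟩ := hf
    have key : ∀ b, g0 b ≠ ⊥ → R a0 b ≠ ⊥ := by
      intro b hg hR
      have hle : g0 b ≤ nwar (σ a0 b) (R a0 b) (f0 a0) := by
        rw [← hdown]
        exact iInf_le _ a0
      rw [hR, nwar_bot_of_ne (hMA _) (hMAnzd _) hf0a] at hle
      exact hg (le_bot_iff.mp hle)
    have ha0Y : a0 ∉ Y := fun hmem => key b1 hg0b1 (charY h1 a0 b1 hmem hb1X)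
    obtain ⟨b2, hb2⟩ := Set.nonempty_iff_ne_empty.mpr hX0
    have hg0b2 : g0 b2 = ⊤ := le_antisymm le_top (chi_of_mem (L := L2) hb2 ▸ hlt1.le b2)
    have hne2 : g0 b2 ≠ ⊥ := by
      rw [hg0b2]
      exact fun e => h2 e.symm
    exact key b2 hne2 (charX h2 a0 b2 ha0Y hb2)
  · -- Part 2: no concept strictly between the bottom concept and ⟨χ_Y^↓, χ_Y⟩
    rintro _hne ⟨g0, f0, ⟨hup, hdown⟩, hlt1, hlt2⟩
    by_cases h1 : (⊥ : L1) = ⊤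
    · -- L1 trivial: f0 = χ_Y, hence g0 = χ_Y^↓
      have hall : ∀ x : L1, x = ⊥ := fun x => le_bot_iff.mp (le_top.trans h1.ge)
      have hf0 : f0 = (chi Y : A → L1) := funext fun a => (hall _).trans (hall _).symm
      exact hlt2.ne (hf0 ▸ hdown).symm
    obtain ⟨b2, hb2⟩ := Function.ne_iff.mp hlt1.ne'
    by_cases h2 : (⊥ : L2) = ⊤
    · exact hb2 (le_bot_iff.mp (le_top.trans h2.ge))
    -- f0 ≥ χ_Y via the Galois connection
    have hgal : (chi Y : A → L1) ≤ upOp R sdiv σ g0 :=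
      (upOp_galois hMA R σ (chi Y) g0).mpr hlt2.le
    rw [hup] at hgal
    have key : ∀ b, g0 b ≠ ⊥ → ∀ a, a ∈ Y → R a b ≠ ⊥ := by
      intro b hg a haY hR
      have hfa : f0 a ≠ ⊥ := by
        intro e
        have ht : (⊤ : L1) ≤ f0 a := chi_of_mem (L := L1) haY ▸ hgal a
        exact h1 (le_antisymm bot_le (e ▸ ht))
      have hle : g0 b ≤ nwar (σ a b) (R a b) (f0 a) := by
        rw [← hdown]
        exact iInf_le _ a
      rw [hR, nwar_bot_of_ne (hMA _) (hMAnzd _) hfa] at hle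
      exact hg (le_bot_iff.mp hle)
    obtain ⟨a1, ha1⟩ := Set.nonempty_iff_ne_empty.mpr hY0
    have hb2X : b2 ∈ X := by
      by_contra hb2X
      exact key b2 hb2 a1 ha1 (charY h1 a1 b2 ha1 hb2X)
    have hf0 : f0 = (chi Y : A → L1) := by
      funext a
      by_cases haY : a ∈ Y
      · rw [chi_of_mem haY]
        exact le_antisymm le_top (chi_of_mem (L := L1) haY ▸ hgal a)
      · rw [chi_of_not_mem haY]
        have hR : R a b2 = ⊥ := charX h2 a b2 haY hb2X
        have hle : f0 a ≤ sdiv (σ a b2) (R a b2) (g0 b2) := by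
          rw [← hup]
          exact iInf_le _ b2
        rw [hR, sdiv_bot_of_ne (hMA _) (hMAnzd _) hb2] at hle
        exact le_bot_iff.mp hle
    exact hlt2.ne (hf0 ▸ hdown).symm
end

section
/- Let (A,B,R,σ) be a normalized context over a multi-adjoint frame whose conjunctors (of all frames) have no zero-divisors, and let (g,f) = (χ_X, χ_Y) ∈ FC with g^↑ ≠ f_⊥ and f^↓ ≠ g_⊥. Then ⟨f^↓, f⟩ ⪯ ⟨g, g^↑⟩ in the concept lattice, i.e. f^↓ ⪯2 g. -/
/-- For `(g, f) = (χ_X, χ_Y) ∈ FC` with `g^↑ ≠ f_⊥` and `f^↓ ≠ g_⊥`, the inequality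
`⟨f^↓, f⟩ ⪯ ⟨g, g^↑⟩` holds, i.e. `f^↓ ⪯₂ g`. -/
theorem FC_pair_concept_interval
    {A B : Type*} [Nonempty A] [Nonempty B]
    {L1 L2 P : Type*} [CompleteLattice L1] [CompleteLattice L2]
    [PartialOrder P] [BoundedOrder P]
    {ι ιp ιo : Type*}
    (conj : ι → L1 → L2 → P) (sdiv : ι → P → L2 → L1) (nwar : ι → P → L1 → L2)
    (hMA : ∀ i, IsAdjointTriple (conj i) (sdiv i) (nwar i))
    (hMAnzd : ∀ i, NoZD (conj i))
    (conjP : ιp → P → L2 → L1) (sdivP : ιp → L1 → L2 → P) (nwarP : ιp → L1 → P → L2)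
    (hPO : ∀ j, IsAdjointTriple (conjP j) (sdivP j) (nwarP j))
    (hPOnzd : ∀ j, NoZD (conjP j))
    (conjO : ιo → L1 → P → L2) (sdivO : ιo → L2 → P → L1) (nwarO : ιo → L2 → L1 → P)
    (hOO : ∀ k, IsAdjointTriple (conjO k) (sdivO k) (nwarO k))
    (hOOnzd : ∀ k, NoZD (conjO k))
    (R : A → B → P) (σ : A → B → ι) (σp : A → B → ιp) (σo : A → B → ιo)
    (hnorm : Normalized R)
    (X : Set B) (Y : Set A)
    (hXY : MemFC (L1 := L1) (L2 := L2) R sdivO σo nwarP σp X Y)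
    (hup : upOp R sdiv σ (chi X) ≠ (fun _ : A => (⊥ : L1)))
    (hdown : downOp R nwar σ (chi Y) ≠ (fun _ : B => (⊥ : L2))) :
    downOp R nwar σ (chi Y) ≤ (chi X : B → L2) := by
  classical
  by_cases hdeg : (⊤ : L1) = ⊥
  · exact absurd (funext fun a => le_bot_iff.mp (hdeg ▸ le_top)) hup
  intro b
  by_cases hb : b ∈ X
  · simp [chi, hb]
  -- pick a ∈ Y
  obtain ⟨a, ha⟩ := Set.nonempty_iff_ne_empty.mpr hXY.2.2.1
  have hupN := congrFun hXY.2.2.2.2.1 a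
  have h1 : (⊤ : L1) ≤ sdivO (σo a b) (chi X b) (R a b) := by
    rw [upN] at hupN
    simp only [chi, ha, if_pos] at hupN
    exact hupN.symm.le.trans (iInf_le _ b)
  have hXb : (chi X b : L2) = ⊥ := by simp [chi, hb]
  rw [hXb] at h1
  have hRab : R a b = ⊥ := by
    have h2 : conjO (σo a b) ⊤ (R a b) ≤ ⊥ := ((hOO (σo a b)) ⊤ (R a b) ⊥).1.mp h1
    rcases hOOnzd (σo a b) ⊤ (R a b) (le_bot_iff.mp h2) with h | h
    · exact absurd h hdeg
    · exact h
  have hterm : nwar (σ a b) (R a b) (chi Y a) = ⊥ := by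
    have hYa : (chi Y a : L1) = ⊤ := by simp [chi, ha]
    rw [hRab, hYa]
    have h3 : conj (σ a b) ⊤ (nwar (σ a b) ⊥ ⊤) ≤ ⊥ :=
      ((hMA (σ a b)) ⊤ (nwar (σ a b) ⊥ ⊤) ⊥).2.mpr le_rfl
    rcases hMAnzd (σ a b) ⊤ (nwar (σ a b) ⊥ ⊤) (le_bot_iff.mp h3) with h | h
    · exact absurd h hdeg
    · exact h
  calc downOp R nwar σ (chi Y) b ≤ nwar (σ a b) (R a b) (chi Y a) := iInf_le _ a
    _ = ⊥ := hterm
    _ ≤ chi X b := bot_le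
end

section
/- Let (A,B,R,σ) be a context over a multi-adjoint frame, with concept-forming operators ↑: L2^B → L1^A and ↓: L1^A → L2^B. Then (↑,↓) is an antitone Galois connection: for all g ∈ L2^B and f ∈ L1^A, f ⪯1 g^↑ if and only if g ⪯2 f^↓ (where fuzzy sets are ordered pointwise). -/
/-- The concept-forming operators of a multi-adjoint concept lattice form an antitone
Galois connection: `f ⪯₁ g^↑ ↔ g ⪯₂ f^↓`. -/
theorem concept_forming_galois_connection
    {A B : Type*} [Nonempty A] [Nonempty B]
    {L1 L2 P : Type*} [CompleteLattice L1] [CompleteLattice L2]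
    [PartialOrder P] [BoundedOrder P]
    {ι : Type*}
    (conj : ι → L1 → L2 → P) (sdiv : ι → P → L2 → L1) (nwar : ι → P → L1 → L2)
    (hMA : ∀ i, IsAdjointTriple (conj i) (sdiv i) (nwar i))
    (R : A → B → P) (σ : A → B → ι) :
    ∀ (g : B → L2) (f : A → L1),
      f ≤ upOp R sdiv σ g ↔ g ≤ downOp R nwar σ f := by
  intro g f
  constructor
  · intro h b
    rw [downOp, le_iInf_iff]
    intro a
    rw [← (hMA (σ a b) (f a) (g b) (R a b)).2]
    rw [← (hMA (σ a b) (f a) (g b) (R a b)).1]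
    exact (h a).trans (iInf_le _ b)
  · intro h a
    rw [upOp, le_iInf_iff]
    intro b
    rw [(hMA (σ a b) (f a) (g b) (R a b)).1, (hMA (σ a b) (f a) (g b) (R a b)).2]
    exact (h b).trans (iInf_le _ a)
end
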